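/- Let A and B be positive operators on a complex Hilbert space such that k·I ≤ A^(−1/2)·B·A^(−1/2) ≤ K·I for some constants 0 < k ≤ K, and let ν ∈ [0,1]. Then exp((1/2)·ν·(1−ν)·(1 − min(1,K)/max(1,k))²)·A♯_ν B ≤ (1−ν)·A + ν·B ≤ exp((1/2)·ν·(1−ν)·(max(1,K)/min(1,k) − 1)²)·A♯_ν B in the operator order, where A♯_ν B = A^(1/2)·(A^(−1/2)·B·A^(−1/2))^ν·A^(1/2). -/

import Mathlib

open Real Set

lemma my_gbounds (x : ℝ) {t : ℝ} (ht : t ∈ Icc (0:ℝ) 1) :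
    min 1 x ≤ 1 + t*(x-1) ∧ 1 + t*(x-1) ≤ max 1 x := by
  obtain ⟨ht0, ht1⟩ := ht
  rcases le_total 1 x with h|h
  · rw [min_eq_left h, max_eq_right h]; constructor <;> nlinarith
  · rw [min_eq_right h, max_eq_left h]; constructor <;> nlinarith

lemma my_concave_nonneg (f : ℝ → ℝ) (hf : ContinuousOn f (Icc 0 1))
    (hd : DifferentiableOn ℝ f (Ioo 0 1)) (hanti : AntitoneOn (deriv f) (Ioo 0 1))
    (h0 : f 0 = 0) (h1 : f 1 = 0) (ν : ℝ) (hν0 : 0 ≤ ν) (hν1 : ν ≤ 1) : 0 ≤ f ν := by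
  have hc : ConcaveOn ℝ (Icc 0 1) f :=
    AntitoneOn.concaveOn_of_deriv (convex_Icc 0 1) hf
      (by rwa [interior_Icc]) (by rwa [interior_Icc])
  have := hc.2 (left_mem_Icc.2 zero_le_one) (right_mem_Icc.2 zero_le_one)
      (by linarith : (0:ℝ) ≤ 1 - ν) hν0 (by ring)
  simpa [h0, h1] using this

lemma my_hasDeriv (x c : ℝ) (t : ℝ) (hgt : 0 < 1 + t*(x-1)) :
    HasDerivAt (fun t => Real.log (1+t*(x-1)) - t * Real.log x - c/2*(t - t^2))
      ((x-1)/(1+t*(x-1)) - Real.log x - c/2*(1-2*t)) t := by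
  have hg : HasDerivAt (fun t : ℝ => 1 + t*(x-1)) (x-1) t := by
    simpa using ((hasDerivAt_id t).mul_const (x-1)).const_add 1
  have hlog : HasDerivAt (fun t : ℝ => Real.log (1+t*(x-1))) ((x-1)/(1+t*(x-1))) t :=
    hg.log (ne_of_gt hgt)
  have h2 : HasDerivAt (fun t : ℝ => t * Real.log x) (Real.log x) t := by
    simpa using (hasDerivAt_id t).mul_const (Real.log x)
  have h3 : HasDerivAt (fun t : ℝ => c/2*(t - t^2)) (c/2*(1-2*t)) t := by
    have : HasDerivAt (fun t : ℝ => t - t^2) (1 - 2*t) t := by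
      simpa [Pi.sub_def] using (hasDerivAt_id t).sub (hasDerivAt_pow 2 t)
    simpa using this.const_mul (c/2)
  exact (hlog.sub h2).sub h3

lemma my_core (x c ν : ℝ) (hx : 0 < x) (hν0 : 0 ≤ ν) (hν1 : ν ≤ 1)
    (hc : ∀ s t : ℝ, s ∈ Icc (0:ℝ) 1 → t ∈ Icc (0:ℝ) 1 →
      c * ((1 + s*(x-1)) * (1 + t*(x-1))) ≤ (x-1)^2) :
    0 ≤ Real.log (1+ν*(x-1)) - ν * Real.log x - c/2*(ν - ν^2) := by
  have hmin : 0 < min 1 x := lt_min one_pos hx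
  have hgpos : ∀ t ∈ Icc (0:ℝ) 1, 0 < 1 + t*(x-1) :=
    fun t ht => lt_of_lt_of_le hmin (my_gbounds x ht).1
  set f : ℝ → ℝ := fun t => Real.log (1+t*(x-1)) - t * Real.log x - c/2*(t - t^2) with hf
  have hD : ∀ t ∈ Icc (0:ℝ) 1, HasDerivAt f
      ((x-1)/(1+t*(x-1)) - Real.log x - c/2*(1-2*t)) t :=
    fun t ht => my_hasDeriv x c t (hgpos t ht)
  have hcont : ContinuousOn f (Icc 0 1) :=
    fun t ht => ((hD t ht).differentiableAt).continuousAt.continuousWithinAt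
  have hdiff : DifferentiableOn ℝ f (Ioo 0 1) :=
    fun t ht => ((hD t (Ioo_subset_Icc_self ht)).differentiableAt).differentiableWithinAt
  have hderiv : ∀ t ∈ Ioo (0:ℝ) 1, deriv f t =
      (x-1)/(1+t*(x-1)) - Real.log x - c/2*(1-2*t) :=
    fun t ht => (hD t (Ioo_subset_Icc_self ht)).deriv
  have hanti : AntitoneOn (deriv f) (Ioo 0 1) := by
    intro s hs t ht hst
    rw [hderiv s hs, hderiv t ht]
    have hsI := Ioo_subset_Icc_self hs
    have htI := Ioo_subset_Icc_self ht
    have hgs := hgpos s hsI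
    have hgt := hgpos t htI
    have hkey := hc s t hsI htI
    rw [sub_le_sub_iff]
    have hd : (x-1)/(1+s*(x-1)) - (x-1)/(1+t*(x-1))
        = (x-1)^2*(t-s)/((1+s*(x-1))*(1+t*(x-1))) := by
      rw [div_sub_div _ _ hgs.ne' hgt.ne']; ring
    have hge : c*(t-s) ≤ (x-1)^2*(t-s)/((1+s*(x-1))*(1+t*(x-1))) := by
      rw [le_div_iff₀ (by positivity)]
      nlinarith [mul_pos hgs hgt]
    nlinarith [hge, hd]
  have h0 : f 0 = 0 := by simp [hf]
  have h1 : f 1 = 0 := by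
    simp only [hf]
    rw [show 1+1*(x-1) = x by ring]; ring
  have := my_concave_nonneg f hcont hdiff hanti h0 h1 ν hν0 hν1
  simpa [hf] using this

lemma my_core' (x c ν : ℝ) (hx : 0 < x) (hν0 : 0 ≤ ν) (hν1 : ν ≤ 1)
    (hc : ∀ s t : ℝ, s ∈ Icc (0:ℝ) 1 → t ∈ Icc (0:ℝ) 1 →
      (x-1)^2 ≤ c * ((1 + s*(x-1)) * (1 + t*(x-1)))) :
    Real.log (1+ν*(x-1)) ≤ ν * Real.log x + c/2*(ν - ν^2) := by
  have hmin : 0 < min 1 x := lt_min one_pos hx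
  have hgpos : ∀ t ∈ Icc (0:ℝ) 1, 0 < 1 + t*(x-1) :=
    fun t ht => lt_of_lt_of_le hmin (my_gbounds x ht).1
  set f : ℝ → ℝ := fun t =>
    t * Real.log x + c/2*(t - t^2) - Real.log (1+t*(x-1)) with hf
  have hD : ∀ t ∈ Icc (0:ℝ) 1, HasDerivAt f
      (Real.log x + c/2*(1-2*t) - (x-1)/(1+t*(x-1))) t := by
    intro t ht
    have := my_hasDeriv x c t (hgpos t ht)
    have := this.neg
    convert this using 1
    · rfl
    · rfl
    · ext u; simp [hf]; ring
    · ring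
  have hcont : ContinuousOn f (Icc 0 1) :=
    fun t ht => ((hD t ht).differentiableAt).continuousAt.continuousWithinAt
  have hdiff : DifferentiableOn ℝ f (Ioo 0 1) :=
    fun t ht => ((hD t (Ioo_subset_Icc_self ht)).differentiableAt).differentiableWithinAt
  have hderiv : ∀ t ∈ Ioo (0:ℝ) 1, deriv f t =
      Real.log x + c/2*(1-2*t) - (x-1)/(1+t*(x-1)) :=
    fun t ht => (hD t (Ioo_subset_Icc_self ht)).deriv
  have hanti : AntitoneOn (deriv f) (Ioo 0 1) := by
    intro s hs t ht hst
    rw [hderiv s hs, hderiv t ht]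
    have hsI := Ioo_subset_Icc_self hs
    have htI := Ioo_subset_Icc_self ht
    have hgs := hgpos s hsI
    have hgt := hgpos t htI
    have hkey := hc s t hsI htI
    have hd : (x-1)/(1+t*(x-1)) - (x-1)/(1+s*(x-1))
        = -((x-1)^2*(t-s)/((1+s*(x-1))*(1+t*(x-1)))) := by
      rw [div_sub_div _ _ hgt.ne' hgs.ne']; ring
    have hge : (x-1)^2*(t-s)/((1+s*(x-1))*(1+t*(x-1))) ≤ c*(t-s) := by
      rw [div_le_iff₀ (by positivity)]
      nlinarith [mul_pos hgs hgt]
    nlinarith [hge, hd]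
  have h0 : f 0 = 0 := by simp [hf]
  have h1 : f 1 = 0 := by
    simp only [hf]
    rw [show 1+1*(x-1) = x by ring]; ring
  have := my_concave_nonneg f hcont hdiff hanti h0 h1 ν hν0 hν1
  simp only [hf] at this
  linarith

lemma my_scalar_low (x c ν : ℝ) (hx : 0 < x) (hc0 : 0 ≤ c)
    (hc : c * (max 1 x)^2 ≤ (x-1)^2) (hν0 : 0 ≤ ν) (hν1 : ν ≤ 1) :
    Real.exp (1/2*ν*(1-ν)*c) * x ^ ν ≤ 1 - ν + ν * x := by
  have hmax : 0 < max 1 x := lt_of_lt_of_le one_pos (le_max_left 1 x)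
  have hcore := my_core x c ν hx hν0 hν1 (by
    intro s t hs ht
    have h1 := my_gbounds x hs
    have h2 := my_gbounds x ht
    have hmin : 0 < min 1 x := lt_min one_pos hx
    have a1 : 0 ≤ (max 1 x - (1+s*(x-1))) * (1+t*(x-1)) :=
      mul_nonneg (by linarith [h1.2]) (by linarith [h2.1])
    have a2 : 0 ≤ (max 1 x - (1+t*(x-1))) * (max 1 x) :=
      mul_nonneg (by linarith [h2.2]) hmax.le
    have hgg : (1+s*(x-1))*(1+t*(x-1)) ≤ (max 1 x)^2 := by nlinarith [a1, a2]
    have := mul_le_mul_of_nonneg_left hgg hc0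
    linarith)
  have hpos : 0 < 1 + ν*(x-1) :=
    lt_of_lt_of_le (lt_min one_pos hx) (my_gbounds x ⟨hν0, hν1⟩).1
  have := Real.exp_le_exp.2 (by linarith :
    c/2*(ν - ν^2) + ν * Real.log x ≤ Real.log (1+ν*(x-1)))
  rw [Real.exp_log hpos, Real.exp_add] at this
  have hx1 : x ^ ν = Real.exp (ν * Real.log x) := by
    rw [Real.rpow_def_of_pos hx]; ring_nf
  rw [hx1]
  calc Real.exp (1/2*ν*(1-ν)*c) * Real.exp (ν * Real.log x)
      = Real.exp (c/2*(ν-ν^2)) * Real.exp (ν * Real.log x) := by ring_nf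
    _ ≤ 1 + ν*(x-1) := this
    _ = 1 - ν + ν*x := by ring

lemma my_scalar_up (x c ν : ℝ) (hx : 0 < x) (hc0 : 0 ≤ c)
    (hc : (x-1)^2 ≤ c * (min 1 x)^2) (hν0 : 0 ≤ ν) (hν1 : ν ≤ 1) :
    1 - ν + ν * x ≤ Real.exp (1/2*ν*(1-ν)*c) * x ^ ν := by
  have hmin : 0 < min 1 x := lt_min one_pos hx
  have hcore := my_core' x c ν hx hν0 hν1 (by
    intro s t hs ht
    have h1 := my_gbounds x hs
    have h2 := my_gbounds x ht
    have a1 : 0 ≤ ((1+s*(x-1)) - min 1 x) * (1+t*(x-1)) :=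
      mul_nonneg (by linarith [h1.1]) (by linarith [h2.1])
    have a2 : 0 ≤ ((1+t*(x-1)) - min 1 x) * (min 1 x) :=
      mul_nonneg (by linarith [h2.1]) hmin.le
    have hgg : (min 1 x)^2 ≤ (1+s*(x-1))*(1+t*(x-1)) := by nlinarith [a1, a2]
    have := mul_le_mul_of_nonneg_left hgg hc0
    linarith)
  have hpos : 0 < 1 + ν*(x-1) :=
    lt_of_lt_of_le hmin (my_gbounds x ⟨hν0, hν1⟩).1
  have := Real.exp_le_exp.2 hcore
  rw [Real.exp_log hpos, Real.exp_add] at this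
  have hx1 : x ^ ν = Real.exp (ν * Real.log x) := by
    rw [Real.rpow_def_of_pos hx]; ring_nf
  calc 1 - ν + ν * x = 1 + ν*(x-1) := by ring
    _ ≤ Real.exp (ν * Real.log x) * Real.exp (c/2*(ν-ν^2)) := this
    _ = Real.exp (1/2*ν*(1-ν)*c) * x ^ ν := by rw [hx1]; rw [← Real.exp_add, ← Real.exp_add]; ring_nf

open scoped NNReal

lemma my_const_low (k K x : ℝ) (hk : 0 < k) (hkx : k ≤ x) (hxK : x ≤ K) :
    (1 - min 1 K / max 1 k)^2 * (max 1 x)^2 ≤ (x-1)^2 := by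
  have hq : (0:ℝ) < max 1 k := lt_of_lt_of_le one_pos (le_max_left _ _)
  have hx0 : 0 < x := hk.trans_le hkx
  have hK0 : 0 < K := hx0.trans_le hxK
  have hp : (0:ℝ) < min 1 K := lt_min one_pos hK0
  have hv : (0:ℝ) < max 1 x := lt_of_lt_of_le one_pos (le_max_left _ _)
  have hm1 : min 1 K / max 1 k ≤ 1 :=
    (div_le_one hq).2 ((min_le_left _ _).trans (le_max_left _ _))
  have huq : min 1 x * max 1 k ≤ min 1 K * max 1 x :=
    mul_le_mul (min_le_min (le_refl 1) hxK) (max_le_max (le_refl 1) hkx) hq.le hp.le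
  have hstep : (1 - min 1 K / max 1 k) * max 1 x ≤ max 1 x - min 1 x := by
    have h2 : min 1 x ≤ min 1 K / max 1 k * max 1 x := by
      rw [div_mul_eq_mul_div, le_div_iff₀ hq]
      linarith [huq]
    nlinarith
  have hnn : 0 ≤ (1 - min 1 K / max 1 k) * max 1 x :=
    mul_nonneg (by linarith) hv.le
  have hsq : ((1 - min 1 K / max 1 k) * max 1 x)^2 ≤ (max 1 x - min 1 x)^2 :=
    pow_le_pow_left₀ hnn hstep 2
  have habs : (max 1 x - min 1 x)^2 = (x-1)^2 := by
    rcases le_total 1 x with h|h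
    · rw [max_eq_right h, min_eq_left h]
    · rw [max_eq_left h, min_eq_right h]; ring
  calc (1 - min 1 K / max 1 k)^2 * (max 1 x)^2
      = ((1 - min 1 K / max 1 k) * max 1 x)^2 := (mul_pow _ _ 2).symm
    _ ≤ (max 1 x - min 1 x)^2 := hsq
    _ = (x-1)^2 := habs

lemma my_const_up (k K x : ℝ) (hk : 0 < k) (hkx : k ≤ x) (hxK : x ≤ K) :
    (x-1)^2 ≤ (max 1 K / min 1 k - 1)^2 * (min 1 x)^2 := by
  have hQ : (0:ℝ) < min 1 k := lt_min one_pos hk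
  have hx0 : 0 < x := hk.trans_le hkx
  have hu : (0:ℝ) < min 1 x := lt_min one_pos hx0
  have hP : (0:ℝ) < max 1 K := lt_of_lt_of_le one_pos (le_max_left _ _)
  have hm1 : 1 ≤ max 1 K / min 1 k :=
    (one_le_div hQ).2 ((min_le_left _ _).trans (le_max_left _ _))
  have huq : max 1 x * min 1 k ≤ max 1 K * min 1 x :=
    mul_le_mul (max_le_max (le_refl 1) hxK) (min_le_min (le_refl 1) hkx) hQ.le hP.le
  have hstep : max 1 x - min 1 x ≤ (max 1 K / min 1 k - 1) * min 1 x := by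
    have h2 : max 1 x ≤ max 1 K / min 1 k * min 1 x := by
      rw [div_mul_eq_mul_div, le_div_iff₀ hQ]
      linarith [huq]
    nlinarith
  have hnn : 0 ≤ max 1 x - min 1 x := by
    have := min_le_max (a := (1:ℝ)) (b := x); linarith
  have hsq : (max 1 x - min 1 x)^2 ≤ ((max 1 K / min 1 k - 1) * min 1 x)^2 :=
    pow_le_pow_left₀ hnn hstep 2
  have habs : (max 1 x - min 1 x)^2 = (x-1)^2 := by
    rcases le_total 1 x with h|h
    · rw [max_eq_right h, min_eq_left h]
    · rw [max_eq_left h, min_eq_right h]; ring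
  calc (x-1)^2 = (max 1 x - min 1 x)^2 := habs.symm
    _ ≤ ((max 1 K / min 1 k - 1) * min 1 x)^2 := hsq
    _ = (max 1 K / min 1 k - 1)^2 * (min 1 x)^2 := mul_pow _ _ 2

set_option maxHeartbeats 2000000 in
set_option synthInstance.maxHeartbeats 1000000 in
theorem stmt_16 {H : Type*} [NormedAddCommGroup H] [InnerProductSpace ℂ H] [CompleteSpace H]
    (A B : H →L[ℂ] H) (hA : 0 ≤ A) (hB : 0 ≤ B) (hAinv : IsUnit A)
    (k K : ℝ) (hk : 0 < k) (hkK : k ≤ K) (ν : ℝ) (hν : ν ∈ Set.Icc (0:ℝ) 1)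
    (hkC : k • (1 : H →L[ℂ] H) ≤ CFC.rpow A (-(1/2) : ℝ) * B * CFC.rpow A (-(1/2) : ℝ))
    (hCK : CFC.rpow A (-(1/2) : ℝ) * B * CFC.rpow A (-(1/2) : ℝ) ≤ K • (1 : H →L[ℂ] H)) :
    Real.exp (1/2 * ν * (1 - ν) * (1 - min 1 K / max 1 k)^2) •
        (CFC.sqrt A * CFC.rpow (CFC.rpow A (-(1/2) : ℝ) * B * CFC.rpow A (-(1/2) : ℝ)) ν
          * CFC.sqrt A)
      ≤ (1 - ν) • A + ν • B ∧
    (1 - ν) • A + ν • B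
      ≤ Real.exp (1/2 * ν * (1 - ν) * (max 1 K / min 1 k - 1)^2) •
        (CFC.sqrt A * CFC.rpow (CFC.rpow A (-(1/2) : ℝ) * B * CFC.rpow A (-(1/2) : ℝ)) ν
          * CFC.sqrt A) := by
  obtain ⟨hν0, hν1⟩ := hν
  set R : H →L[ℂ] H := CFC.rpow A (-(1/2) : ℝ) with hRdef
  set C : H →L[ℂ] H := R * B * R with hCdef
  have hR0 : (0 : H →L[ℂ] H) ≤ R := CFC.rpow_nonneg
  have hRsa : IsSelfAdjoint R := .of_nonneg hR0
  have hC0 : (0 : H →L[ℂ] H) ≤ C := by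
    simpa [hRsa.star_eq] using star_left_conjugate_nonneg hB R
  have hCsa : IsSelfAdjoint C := .of_nonneg hC0
  have hspeck : ∀ x ∈ spectrum ℝ C, k ≤ x := by
    refine (algebraMap_le_iff_le_spectrum (R := ℝ) (a := C) hCsa).1 ?_
    rw [Algebra.algebraMap_eq_smul_one]
    exact hkC
  have hspecK : ∀ x ∈ spectrum ℝ C, x ≤ K := by
    refine (le_algebraMap_iff_spectrum_le (R := ℝ) (a := C) hCsa).1 ?_
    rw [Algebra.algebraMap_eq_smul_one]
    exact hCK
  -- sqrt facts
  set S : H →L[ℂ] H := CFC.sqrt A with hSdef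
  have hS0 : (0 : H →L[ℂ] H) ≤ S := CFC.sqrt_nonneg A
  have hSsa : IsSelfAdjoint S := .of_nonneg hS0
  have hSS : S * S = A := CFC.sqrt_mul_sqrt_self A hA
  have hA0 : (0 : ℝ≥0) ∉ spectrum ℝ≥0 A := spectrum.zero_notMem ℝ≥0 hAinv
  have hSR : S * R = 1 := by
    rw [hSdef, hRdef, CFC.sqrt_eq_rpow, ← CFC.rpow_eq_pow]
    exact CFC.rpow_mul_rpow_neg (1/2 : ℝ) (IsStrictlyPositive.iff_of_unital.2 ⟨hA, hAinv⟩)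
  have hRS : R * S = 1 := by
    rw [hSdef, hRdef, CFC.sqrt_eq_rpow, ← CFC.rpow_eq_pow]
    exact CFC.rpow_neg_mul_rpow (1/2 : ℝ) (IsStrictlyPositive.iff_of_unital.2 ⟨hA, hAinv⟩)
  have hSCS : S * C * S = B := by
    calc S * (R * B * R) * S = (S * R) * B * (R * S) := by
          simp only [mul_assoc]
      _ = B := by rw [hSR, hRS, one_mul, mul_one]
  -- rpow as real cfc
  have hCν : CFC.rpow C ν = cfc (fun x : ℝ => x ^ ν) C := by
    rw [show CFC.rpow C ν = cfc (fun x : ℝ≥0 => x ^ ν) C from rfl,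
      cfc_nnreal_eq_real _ _ hC0]
    refine cfc_congr fun x hx => ?_
    have hx0 : 0 < x := lt_of_lt_of_le hk (hspeck x hx)
    rw [NNReal.coe_rpow, Real.coe_toNNReal x hx0.le]
  have hcont_rpow : ContinuousOn (fun x : ℝ => x ^ ν) (spectrum ℝ C) := fun x hx =>
    (Real.continuousAt_rpow_const x ν
      (Or.inl (ne_of_gt (lt_of_lt_of_le hk (hspeck x hx))))).continuousWithinAt
  have hT : cfc (fun x : ℝ => (1-ν) + ν*x) C = (1-ν) • (1 : H →L[ℂ] H) + ν • C := by
    rw [cfc_add C (fun _ => (1-ν)) (fun x => ν*x) (by fun_prop) (by fun_prop),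
      cfc_const _ _ hCsa, cfc_const_mul_id ν C hCsa, Algebra.algebraMap_eq_smul_one]
  have hE : ∀ e : ℝ, e • cfc (fun x : ℝ => x ^ ν) C = cfc (fun x : ℝ => e * x ^ ν) C :=
    fun e => (cfc_const_mul e _ C hcont_rpow).symm
  -- the two pre-conjugation inequalities
  have hlow : Real.exp (1/2 * ν * (1 - ν) * (1 - min 1 K / max 1 k)^2) • CFC.rpow C ν
      ≤ (1-ν) • (1 : H →L[ℂ] H) + ν • C := by
    rw [hCν, hE, ← hT]
    refine (cfc_le_iff _ _ C (by fun_prop (disch := assumption)) (by fun_prop) hCsa).2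
      fun x hx => ?_
    have hx0 : 0 < x := lt_of_lt_of_le hk (hspeck x hx)
    have := my_scalar_low x ((1 - min 1 K / max 1 k)^2) ν hx0 (sq_nonneg _)
      (my_const_low k K x hk (hspeck x hx) (hspecK x hx)) hν0 hν1
    calc Real.exp (1/2 * ν * (1-ν) * (1 - min 1 K / max 1 k)^2) * x ^ ν
        ≤ 1 - ν + ν * x := this
      _ = (1-ν) + ν*x := by ring
  have hup : (1-ν) • (1 : H →L[ℂ] H) + ν • C
      ≤ Real.exp (1/2 * ν * (1 - ν) * (max 1 K / min 1 k - 1)^2) • CFC.rpow C ν := by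
    rw [hCν, hE, ← hT]
    refine (cfc_le_iff _ _ C (by fun_prop) (by fun_prop (disch := assumption)) hCsa).2
      fun x hx => ?_
    have hx0 : 0 < x := lt_of_lt_of_le hk (hspeck x hx)
    have := my_scalar_up x ((max 1 K / min 1 k - 1)^2) ν hx0 (sq_nonneg _)
      (my_const_up k K x hk (hspeck x hx) (hspecK x hx)) hν0 hν1
    calc (1-ν) + ν*x = 1 - ν + ν * x := by ring
      _ ≤ Real.exp (1/2 * ν * (1-ν) * (max 1 K / min 1 k - 1)^2) * x ^ ν := this
  -- conjugate by S
  have hconj : ∀ {X Y : H →L[ℂ] H}, X ≤ Y → S * X * S ≤ S * Y * S :=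
    fun hXY => by simpa [hSsa.star_eq] using star_left_conjugate_le_conjugate hXY S
  have hmid : S * ((1-ν) • (1 : H →L[ℂ] H) + ν • C) * S = (1 - ν) • A + ν • B := by
    rw [mul_add, add_mul, mul_smul_comm, mul_smul_comm, smul_mul_assoc, smul_mul_assoc,
      mul_one, hSS, hSCS]
  have hside : ∀ e : ℝ, S * (e • CFC.rpow C ν) * S = e • (S * CFC.rpow C ν * S) :=
    fun e => by rw [mul_smul_comm, smul_mul_assoc]
  constructor
  · have := hconj hlow
    rw [hside, hmid] at this
    exact this
  · have := hconj hup
    rw [hside, hmid] at this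
    exact this
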